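/- Under the convention β_n η_n = α_n ρ_n (which holds since β_n = α_n/δ_n and ρ_n = η_n/δ_n with 0/0 := 0), for every n ∈ {1,...,N}: E[ΔS_n ∑_{i=n}^{N} ω_i (∑_{j=n+1}^{i} ρ_j ΔS_j ∏_{k=j+1}^{i}(1 - β_k ΔS_k)) | F_{n-1}] = E[ΔS_n ∑_{i=n}^{N} ω_i H_i (∑_{j=n+1}^{i} β_j ΔS_j ∏_{k=j+1}^{i}(1 - β_k ΔS_k)) | F_{n-1}] almost surely. -/

import Mathlib

open MeasureTheory Finset

/-- `A_n = ∑_{i=n}^N ω_i ∏_{j=n+1}^i (1 - β_j ΔS_j)`. -/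
def Aproc {Ω : Type*} (N : ℕ) (w β ΔS : ℕ → Ω → ℝ) (n : ℕ) (x : Ω) : ℝ :=
  ∑ i ∈ Finset.Icc n N, w i x * ∏ j ∈ Finset.Icc (n + 1) i, (1 - β j x * ΔS j x)

/-- `D_n = ∑_{i=n}^N ω_i ∏_{j=n+1}^i (1 - β_j ΔS_j)²`. -/
def Dproc {Ω : Type*} (N : ℕ) (w β ΔS : ℕ → Ω → ℝ) (n : ℕ) (x : Ω) : ℝ :=
  ∑ i ∈ Finset.Icc n N, w i x * ∏ j ∈ Finset.Icc (n + 1) i, (1 - β j x * ΔS j x) ^ 2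



open Filter

/-- `B_n = ∑_{i=n}^N H_i ω_i ∏_{j=n+1}^i (1 - β_j ΔS_j)` (auxiliary). -/
def Bproc {Ω : Type*} (N : ℕ) (w H β ΔS : ℕ → Ω → ℝ) (n : ℕ) (x : Ω) : ℝ :=
  ∑ i ∈ Finset.Icc n N, H i x * w i x * ∏ j ∈ Finset.Icc (n + 1) i, (1 - β j x * ΔS j x)

/-- single term of the swapped sum (auxiliary). -/
def termF {Ω : Type*} (N : ℕ) (w H β ρ ΔS : ℕ → Ω → ℝ) (j : ℕ) (x : Ω) : ℝ :=
  ρ j x * ΔS j x * Aproc N w β ΔS j x - β j x * ΔS j x * Bproc N w H β ΔS j x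

lemma sum_swap_aux (n N : ℕ) (a c : ℕ → ℝ) (p : ℕ → ℕ → ℝ) :
    ∑ i ∈ Finset.Icc n N, a i * ∑ j ∈ Finset.Icc (n+1) i, c j * p j i
      = ∑ j ∈ Finset.Icc (n+1) N, c j * ∑ i ∈ Finset.Icc j N, a i * p j i := by
  simp_rw [Finset.mul_sum]
  rw [Finset.sum_comm' (t' := Finset.Icc (n+1) N) (s' := fun j => Finset.Icc j N)
    (by intro i j; simp only [Finset.mem_Icc]; omega)]
  exact Finset.sum_congr rfl fun j _ => Finset.sum_congr rfl fun i _ => by ring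

lemma abs_mul_sum_le (s : ℝ) (S : Finset ℕ) (wv P : ℕ → ℝ)
    (hw : ∀ i, 0 ≤ wv i ∧ wv i ≤ 1) :
    |s * ∑ i ∈ S, wv i * P i| ≤ (s ^ 2 * ∑ i ∈ S, wv i * P i ^ 2 + S.card) / 2 := by
  have h1 : |s * ∑ i ∈ S, wv i * P i| ≤ ∑ i ∈ S, |s * (wv i * P i)| := by
    rw [Finset.mul_sum]; exact Finset.abs_sum_le_sum_abs _ _
  have h2 : ∀ i ∈ S, |s * (wv i * P i)| ≤ (wv i * (s ^ 2 * P i ^ 2) + 1) / 2 := by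
    intro i _
    have hq : |s * P i| ≤ (s ^ 2 * P i ^ 2 + 1) / 2 := by
      nlinarith [sq_nonneg (|s * P i| - 1), sq_abs (s * P i), abs_nonneg (s * P i)]
    have he : |s * (wv i * P i)| = wv i * |s * P i| := by
      rw [show s * (wv i * P i) = wv i * (s * P i) by ring, abs_mul, abs_of_nonneg (hw i).1]
    rw [he]
    nlinarith [(hw i).1, (hw i).2, abs_nonneg (s * P i)]
  have h3 : ∑ i ∈ S, wv i * (s ^ 2 * P i ^ 2) = s ^ 2 * ∑ i ∈ S, wv i * P i ^ 2 := by
    rw [Finset.mul_sum]; exact Finset.sum_congr rfl fun i _ => by ring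
  calc |s * ∑ i ∈ S, wv i * P i| ≤ ∑ i ∈ S, (wv i * (s ^ 2 * P i ^ 2) + 1) / 2 :=
        h1.trans (Finset.sum_le_sum h2)
    _ = (s ^ 2 * ∑ i ∈ S, wv i * P i ^ 2 + S.card) / 2 := by
        rw [← Finset.sum_div, Finset.sum_add_distrib, Finset.sum_const, h3]
        simp [nsmul_eq_mul]

lemma abs_mul_sum_le' (s : ℝ) (S : Finset ℕ) (wv Hv P : ℕ → ℝ)
    (hw : ∀ i, 0 ≤ wv i ∧ wv i ≤ 1) :
    |s * ∑ i ∈ S, Hv i * wv i * P i|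
      ≤ ((∑ i ∈ S, Hv i ^ 2) + s ^ 2 * ∑ i ∈ S, wv i * P i ^ 2) / 2 := by
  have h1 : |s * ∑ i ∈ S, Hv i * wv i * P i| ≤ ∑ i ∈ S, |s * (Hv i * wv i * P i)| := by
    rw [Finset.mul_sum]; exact Finset.abs_sum_le_sum_abs _ _
  have h2 : ∀ i ∈ S, |s * (Hv i * wv i * P i)| ≤ (Hv i ^ 2 + wv i * (s ^ 2 * P i ^ 2)) / 2 := by
    intro i _
    have he : |s * (Hv i * wv i * P i)| = wv i * (|Hv i| * |s * P i|) := by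
      rw [show s * (Hv i * wv i * P i) = wv i * (Hv i * (s * P i)) by ring, abs_mul, abs_mul,
        abs_of_nonneg (hw i).1]
    rw [he]
    nlinarith [(hw i).1, (hw i).2, sq_nonneg (|Hv i| - |s * P i|), sq_abs (Hv i),
      sq_abs (s * P i), abs_nonneg (Hv i), abs_nonneg (s * P i),
      mul_nonneg (abs_nonneg (Hv i)) (abs_nonneg (s * P i))]
  calc |s * ∑ i ∈ S, Hv i * wv i * P i| ≤ ∑ i ∈ S, (Hv i ^ 2 + wv i * (s ^ 2 * P i ^ 2)) / 2 :=
        h1.trans (Finset.sum_le_sum h2)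
    _ = ((∑ i ∈ S, Hv i ^ 2) + s ^ 2 * ∑ i ∈ S, wv i * P i ^ 2) / 2 := by
        rw [← Finset.sum_div, Finset.sum_add_distrib]
        congr 2
        rw [Finset.mul_sum]; exact Finset.sum_congr rfl fun i _ => by ring

lemma pullout_zero {Ω : Type*} {m0 : MeasurableSpace Ω} {μ : Measure Ω} [IsFiniteMeasure μ]
    {mt : MeasurableSpace Ω} (hm : mt ≤ m0)
    {fA fB : Ω → ℝ} (hfA : Integrable fA μ) (hfB : Integrable fB μ)
    {g1 g2 : Ω → ℝ} (hg1 : StronglyMeasurable[mt] g1) (hg2 : StronglyMeasurable[mt] g2)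
    (c : ℝ) (hb1 : ∀ x, |g1 x| ≤ c) (hb2 : ∀ x, |g2 x| ≤ c)
    (hgg : ∀ x, g1 x * (μ[fA|mt]) x = g2 x * (μ[fB|mt]) x)
    {s : Set Ω} (hs : MeasurableSet[mt] s) :
    ∫ x in s, (g1 x * fA x - g2 x * fB x) ∂μ = 0 := by
  haveI : SigmaFinite (μ.trim hm) := by infer_instance
  have h1int : Integrable (g1 * fA) μ := by
    refine Integrable.mono' (hfA.norm.const_mul c)
      (((hg1.mono hm).aestronglyMeasurable).mul hfA.1) (ae_of_all _ fun x => ?_)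
    simp only [Pi.mul_apply, norm_mul]
    exact mul_le_mul_of_nonneg_right (by simpa [Real.norm_eq_abs] using hb1 x) (norm_nonneg _)
  have h2int : Integrable (g2 * fB) μ := by
    refine Integrable.mono' (hfB.norm.const_mul c)
      (((hg2.mono hm).aestronglyMeasurable).mul hfB.1) (ae_of_all _ fun x => ?_)
    simp only [Pi.mul_apply, norm_mul]
    exact mul_le_mul_of_nonneg_right (by simpa [Real.norm_eq_abs] using hb2 x) (norm_nonneg _)
  have hsub : Integrable (g1 * fA - g2 * fB) μ := h1int.sub h2int
  have hce : μ[g1 * fA - g2 * fB|mt] =ᵐ[μ] 0 := by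
    have e1 := condExp_mul_of_stronglyMeasurable_left hg1 h1int hfA
    have e2 := condExp_mul_of_stronglyMeasurable_left hg2 h2int hfB
    calc μ[g1 * fA - g2 * fB|mt]
        =ᵐ[μ] μ[g1 * fA|mt] - μ[g2 * fB|mt] := condExp_sub h1int h2int _
      _ =ᵐ[μ] g1 * μ[fA|mt] - g2 * μ[fB|mt] := e1.sub e2
      _ =ᵐ[μ] 0 := ae_of_all _ fun x => by
          simp only [Pi.sub_apply, Pi.mul_apply, Pi.zero_apply, hgg x, sub_self]
  calc ∫ x in s, (g1 x * fA x - g2 x * fB x) ∂μ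
      = ∫ x in s, (μ[g1 * fA - g2 * fB|mt]) x ∂μ := (setIntegral_condExp hm hsub hs).symm
    _ = 0 := by
        rw [integral_congr_ae (ae_restrict_of_ae hce)]
        simp

/-- Lemma 2: since `β_n η_n = α_n ρ_n` (as `β = α/δ`, `ρ = η/δ` with `0/0 := 0`),
for every `n ∈ {1,…,N}`:
`E[ΔS_n ∑_{i=n}^N ω_i (∑_{j=n+1}^i ρ_j ΔS_j ∏_{k=j+1}^i (1 - β_k ΔS_k)) | F_{n-1}]
 = E[ΔS_n ∑_{i=n}^N ω_i H_i (∑_{j=n+1}^i β_j ΔS_j ∏_{k=j+1}^i (1 - β_k ΔS_k)) | F_{n-1}]`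
almost surely. -/
theorem stmt_9 {Ω : Type*} {m0 : MeasurableSpace Ω} (μ : Measure Ω) [IsProbabilityMeasure μ]
    (N : ℕ) (ℱ : Filtration ℕ m0) (ΔS w H : ℕ → Ω → ℝ) (αp ηp δp β ρ : ℕ → Ω → ℝ)
    (hw : ∀ n x, w n x ∈ Set.Icc (0 : ℝ) 1)
    (hwa : ∀ n, StronglyMeasurable[ℱ n] (w n))
    (hHa : ∀ n, StronglyMeasurable[ℱ n] (H n))
    (hSa : ∀ n, StronglyMeasurable[ℱ n] (ΔS n))
    (hH : ∀ n, MemLp (H n) 2 μ)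
    (hSloc : ∀ n, Integrable (fun x => ΔS n x ^ 2) μ)
    (hβ : ∀ n x, β n x = αp n x / δp n x)
    (hρ : ∀ n x, ρ n x = ηp n x / δp n x)
    (hβ0 : ∀ x, β 0 x = 0) (hρ0 : ∀ x, ρ 0 x = 0)
    (hα : ∀ n ∈ Finset.Icc 1 N,
      αp n =ᵐ[μ] μ[fun x => ΔS n x * Aproc N w β ΔS n x | ℱ (n - 1)])
    (hη : ∀ n ∈ Finset.Icc 1 N,
      ηp n =ᵐ[μ] μ[fun x => ΔS n x *
        ∑ i ∈ Finset.Icc n N, H i x * w i x *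
          ∏ j ∈ Finset.Icc (n + 1) i, (1 - β j x * ΔS j x) | ℱ (n - 1)])
    (hδ : ∀ n ∈ Finset.Icc 1 N,
      δp n =ᵐ[μ] μ[fun x => ΔS n x ^ 2 * Dproc N w β ΔS n x | ℱ (n - 1)])
    (hint1 : ∀ n, Integrable (fun x => ΔS n x * ∑ i ∈ Finset.Icc n N, w i x *
        ∑ j ∈ Finset.Icc (n + 1) i, ρ j x * ΔS j x *
          ∏ k ∈ Finset.Icc (j + 1) i, (1 - β k x * ΔS k x)) μ)
    (hint2 : ∀ n, Integrable (fun x => ΔS n x * ∑ i ∈ Finset.Icc n N, w i x * H i x *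
        ∑ j ∈ Finset.Icc (n + 1) i, β j x * ΔS j x *
          ∏ k ∈ Finset.Icc (j + 1) i, (1 - β k x * ΔS k x)) μ) :
    ∀ n ∈ Finset.Icc 1 N,
      μ[fun x => ΔS n x * ∑ i ∈ Finset.Icc n N, w i x *
          ∑ j ∈ Finset.Icc (n + 1) i, ρ j x * ΔS j x *
            ∏ k ∈ Finset.Icc (j + 1) i, (1 - β k x * ΔS k x) | ℱ (n - 1)]
        =ᵐ[μ]
      μ[fun x => ΔS n x * ∑ i ∈ Finset.Icc n N, w i x * H i x *
          ∑ j ∈ Finset.Icc (n + 1) i, β j x * ΔS j x *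
            ∏ k ∈ Finset.Icc (j + 1) i, (1 - β k x * ΔS k x) | ℱ (n - 1)] := by
  -- global measurability facts
  have hSm0 : ∀ i, AEStronglyMeasurable (ΔS i) μ :=
    fun i => ((hSa i).mono (ℱ.le i)).aestronglyMeasurable
  have hwm0 : ∀ i, AEStronglyMeasurable (w i) μ :=
    fun i => ((hwa i).mono (ℱ.le i)).aestronglyMeasurable
  have hHm0 : ∀ i, AEStronglyMeasurable (H i) μ :=
    fun i => ((hHa i).mono (ℱ.le i)).aestronglyMeasurable
  have hβae : ∀ k ∈ Finset.Icc 1 N, AEStronglyMeasurable (β k) μ := by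
    intro k hk
    have hsm : StronglyMeasurable
        (fun x => (μ[fun x => ΔS k x * Aproc N w β ΔS k x|ℱ (k-1)]) x
          / (μ[fun x => ΔS k x ^ 2 * Dproc N w β ΔS k x|ℱ (k-1)]) x) :=
      ((stronglyMeasurable_condExp.mono (ℱ.le (k-1))).measurable.div
        (stronglyMeasurable_condExp.mono (ℱ.le (k-1))).measurable).stronglyMeasurable
    refine hsm.aestronglyMeasurable.congr ?_
    filter_upwards [hα k hk, hδ k hk] with x h1 h2
    rw [hβ k x, h1, h2]
  have hfac : ∀ k ∈ Finset.Icc 1 N,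
      AEStronglyMeasurable (fun x => 1 - β k x * ΔS k x) μ := by
    intro k hk
    exact aestronglyMeasurable_const.sub ((hβae k hk).mul (hSm0 k))
  have hprodae : ∀ a b : ℕ, 1 ≤ a → b ≤ N →
      AEStronglyMeasurable (fun x => ∏ k ∈ Finset.Icc a b, (1 - β k x * ΔS k x)) μ := by
    intro a b ha hb
    refine Finset.aestronglyMeasurable_fun_prod _ fun k hk => ?_
    obtain ⟨h1, h2⟩ := Finset.mem_Icc.mp hk
    exact hfac k (Finset.mem_Icc.mpr ⟨le_trans ha h1, le_trans h2 hb⟩)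
  have hAae : ∀ j : ℕ, AEStronglyMeasurable (fun x => Aproc N w β ΔS j x) μ := by
    intro j
    unfold Aproc
    refine Finset.aestronglyMeasurable_fun_sum _ fun i hi => ?_
    exact (hwm0 i).mul (hprodae (j+1) i (by omega) (Finset.mem_Icc.mp hi).2)
  have hBae : ∀ j : ℕ, AEStronglyMeasurable (fun x => Bproc N w H β ΔS j x) μ := by
    intro j
    unfold Bproc
    refine Finset.aestronglyMeasurable_fun_sum _ fun i hi => ?_
    exact (((hHm0 i).mul (hwm0 i))).mul (hprodae (j+1) i (by omega) (Finset.mem_Icc.mp hi).2)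
  intro n hn
  obtain ⟨hn1, hnN⟩ := Finset.mem_Icc.mp hn
  -- the key induction
  have key : ∀ k : ℕ, ∀ t : ℕ, n ≤ t → N ≤ t + k →
      ∀ G : Ω → ℝ, StronglyMeasurable[ℱ t] G → (∀ x, |G x| ≤ 1) →
      Integrable (fun x => G x * (ΔS n x * ∑ j ∈ Finset.Icc (t+1) N, termF N w H β ρ ΔS j x)) μ →
      ∀ s : Set Ω, MeasurableSet[ℱ (n-1)] s →
      ∫ x in s, G x * (ΔS n x * ∑ j ∈ Finset.Icc (t+1) N, termF N w H β ρ ΔS j x) ∂μ = 0 := by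
    intro k
    induction k with
    | zero =>
      intro t hnt hNt G hG hGb hint s hs
      have he : Finset.Icc (t+1) N = ∅ := Finset.Icc_eq_empty (by omega)
      simp [he]
    | succ k ih =>
      intro t hnt hNt G hG hGb hint s hs
      by_cases htN : N ≤ t
      · have he : Finset.Icc (t+1) N = ∅ := Finset.Icc_eq_empty (by omega)
        simp [he]
      · push_neg at htN
        have hs0 : MeasurableSet s := ℱ.le (n-1) s hs
        have hst : MeasurableSet[ℱ t] s := ℱ.mono (by omega : n - 1 ≤ t) s hs
        have hmem1 : t + 1 ∈ Finset.Icc 1 N := Finset.mem_Icc.mpr ⟨by omega, by omega⟩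
        have hsplit : Finset.Icc (t+1) N = insert (t+1) (Finset.Icc (t+1+1) N) := by
          ext a; simp only [Finset.mem_Icc, Finset.mem_insert]; omega
        have hnotmem : t+1 ∉ Finset.Icc (t+1+1) N := by
          simp only [Finset.mem_Icc]; omega
        have hsumsplit : ∀ x : Ω, (∑ j ∈ Finset.Icc (t+1) N, termF N w H β ρ ΔS j x)
            = termF N w H β ρ ΔS (t+1) x
              + ∑ j ∈ Finset.Icc (t+1+1) N, termF N w H β ρ ΔS j x := by
          intro x; rw [hsplit, Finset.sum_insert hnotmem]
        have hαt := hα (t+1) hmem1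
        have hηt := hη (t+1) hmem1
        have hδt := hδ (t+1) hmem1
        simp only [Nat.add_sub_cancel] at hαt hηt hδt
        by_cases hd : Integrable (fun x => ΔS (t+1) x ^ 2 * Dproc N w β ΔS (t+1) x) μ
        · -- good case: δ-integrand is integrable
          have hηt2 : ηp (t+1) =ᵐ[μ]
              μ[fun x => ΔS (t+1) x * Bproc N w H β ΔS (t+1) x|ℱ t] := hηt
          -- integrability of the A-part and B-part
          have intA : Integrable (fun x => ΔS (t+1) x * Aproc N w β ΔS (t+1) x) μ := by
            have hdom : Integrable (fun x => (ΔS (t+1) x ^ 2 * Dproc N w β ΔS (t+1) x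
                + ((Finset.Icc (t+1) N).card : ℝ)) / 2) μ :=
              (hd.add (integrable_const _)).div_const 2
            refine Integrable.mono' hdom ((hSm0 (t+1)).mul (hAae (t+1)))
              (ae_of_all _ fun x => ?_)
            have hD : Dproc N w β ΔS (t+1) x
                = ∑ i ∈ Finset.Icc (t+1) N,
                    w i x * (∏ kk ∈ Finset.Icc (t+1+1) i, (1 - β kk x * ΔS kk x)) ^ 2 := by
              unfold Dproc; exact Finset.sum_congr rfl fun i _ => by rw [Finset.prod_pow]
            have hb := abs_mul_sum_le (ΔS (t+1) x) (Finset.Icc (t+1) N) (fun i => w i x)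
              (fun i => ∏ kk ∈ Finset.Icc (t+1+1) i, (1 - β kk x * ΔS kk x))
              (fun i => ⟨(hw i x).1, (hw i x).2⟩)
            rw [Real.norm_eq_abs]
            calc |ΔS (t+1) x * Aproc N w β ΔS (t+1) x| ≤ _ := hb
              _ = (ΔS (t+1) x ^ 2 * Dproc N w β ΔS (t+1) x
                    + ((Finset.Icc (t+1) N).card : ℝ)) / 2 := by rw [hD]
          have intB : Integrable (fun x => ΔS (t+1) x * Bproc N w H β ΔS (t+1) x) μ := by
            have hdom : Integrable (fun x => ((∑ i ∈ Finset.Icc (t+1) N, H i x ^ 2)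
                + ΔS (t+1) x ^ 2 * Dproc N w β ΔS (t+1) x) / 2) μ :=
              ((integrable_finset_sum _ fun i _ => (hH i).integrable_sq).add hd).div_const 2
            refine Integrable.mono' hdom ((hSm0 (t+1)).mul (hBae (t+1)))
              (ae_of_all _ fun x => ?_)
            have hD : Dproc N w β ΔS (t+1) x
                = ∑ i ∈ Finset.Icc (t+1) N,
                    w i x * (∏ kk ∈ Finset.Icc (t+1+1) i, (1 - β kk x * ΔS kk x)) ^ 2 := by
              unfold Dproc; exact Finset.sum_congr rfl fun i _ => by rw [Finset.prod_pow]
            have hb := abs_mul_sum_le' (ΔS (t+1) x) (Finset.Icc (t+1) N) (fun i => w i x)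
              (fun i => H i x)
              (fun i => ∏ kk ∈ Finset.Icc (t+1+1) i, (1 - β kk x * ΔS kk x))
              (fun i => ⟨(hw i x).1, (hw i x).2⟩)
            rw [Real.norm_eq_abs]
            calc |ΔS (t+1) x * Bproc N w H β ΔS (t+1) x| ≤ _ := hb
              _ = ((∑ i ∈ Finset.Icc (t+1) N, H i x ^ 2)
                    + ΔS (t+1) x ^ 2 * Dproc N w β ΔS (t+1) x) / 2 := by rw [hD]
          -- names for the conditional expectations
          set aCE : Ω → ℝ := μ[fun x => ΔS (t+1) x * Aproc N w β ΔS (t+1) x|ℱ t] with haCEdef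
          set eCE : Ω → ℝ := μ[fun x => ΔS (t+1) x * Bproc N w H β ΔS (t+1) x|ℱ t] with heCEdef
          set dCE : Ω → ℝ := μ[fun x => ΔS (t+1) x ^ 2 * Dproc N w β ΔS (t+1) x|ℱ t] with hdCEdef
          have haSM : StronglyMeasurable[ℱ t] aCE := by rw [haCEdef]; exact stronglyMeasurable_condExp
          have heSM : StronglyMeasurable[ℱ t] eCE := by rw [heCEdef]; exact stronglyMeasurable_condExp
          have hdSM : StronglyMeasurable[ℱ t] dCE := by rw [hdCEdef]; exact stronglyMeasurable_condExp
          have hρm : ∀ᵐ x ∂μ, ρ (t+1) x = eCE x / dCE x := by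
            filter_upwards [hηt2, hδt] with x h1 h2
            rw [hρ, h1, h2]
          have hβm : ∀ᵐ x ∂μ, β (t+1) x = aCE x / dCE x := by
            filter_upwards [hαt, hδt] with x h1 h2
            rw [hβ, h1, h2]
          have hρsm : StronglyMeasurable[ℱ t] (fun x => ΔS n x * (eCE x / dCE x)) :=
            ((hSa n).mono (ℱ.mono hnt)).mul (heSM.measurable.div hdSM.measurable).stronglyMeasurable
          have hβsm : StronglyMeasurable[ℱ t] (fun x => ΔS n x * (aCE x / dCE x)) :=
            ((hSa n).mono (ℱ.mono hnt)).mul (haSM.measurable.div hdSM.measurable).stronglyMeasurable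
          -- truncation sets
          set Fs : ℕ → Set Ω := fun c =>
            {x | |ΔS n x * (eCE x / dCE x)| ≤ (c:ℝ) ∧ |ΔS n x * (aCE x / dCE x)| ≤ (c:ℝ)}
            with hFsdef
          set χ : ℕ → Ω → ℝ := fun c => (Fs c).indicator (fun _ => (1:ℝ)) with hχdef
          have hFmeas : ∀ c : ℕ, MeasurableSet[ℱ t] (Fs c) := by
            intro c
            have h1 : MeasurableSet[ℱ t] {x | |ΔS n x * (eCE x / dCE x)| ≤ (c:ℝ)} :=
              (continuous_abs.comp_stronglyMeasurable hρsm).measurableSet_le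
                stronglyMeasurable_const
            have h2 : MeasurableSet[ℱ t] {x | |ΔS n x * (aCE x / dCE x)| ≤ (c:ℝ)} :=
              (continuous_abs.comp_stronglyMeasurable hβsm).measurableSet_le
                stronglyMeasurable_const
            simp only [hFsdef, Set.setOf_and]
            exact h1.inter h2
          have hχsm : ∀ c : ℕ, StronglyMeasurable[ℱ t] (χ c) := by
            intro c
            simp only [hχdef]
            exact stronglyMeasurable_const.indicator (hFmeas c)
          have hχ01 : ∀ (c : ℕ) (x : Ω), χ c x = 0 ∨ χ c x = 1 := by
            intro c x
            by_cases hx : x ∈ Fs c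
            · right; simp [hχdef, Set.indicator_of_mem hx]
            · left; simp [hχdef, Set.indicator_of_notMem hx]
          have hχb : ∀ (c : ℕ) (x : Ω), |χ c x| ≤ 1 := by
            intro c x; rcases hχ01 c x with h | h <;> simp [h]
          have hχbnd1 : ∀ (c : ℕ) (x : Ω), |χ c x * (ΔS n x * (eCE x / dCE x))| ≤ (c:ℝ) := by
            intro c x
            by_cases hx : x ∈ Fs c
            · have hxx : |ΔS n x * (eCE x / dCE x)| ≤ (c:ℝ) := hx.1
              calc |χ c x * (ΔS n x * (eCE x / dCE x))|
                  = |χ c x| * |ΔS n x * (eCE x / dCE x)| := abs_mul _ _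
                _ ≤ 1 * (c:ℝ) := mul_le_mul (hχb c x) hxx (abs_nonneg _) zero_le_one
                _ = (c:ℝ) := one_mul _
            · simp only [hχdef, Set.indicator_of_notMem hx, zero_mul, abs_zero]
              positivity
          have hχbnd2 : ∀ (c : ℕ) (x : Ω), |χ c x * (ΔS n x * (aCE x / dCE x))| ≤ (c:ℝ) := by
            intro c x
            by_cases hx : x ∈ Fs c
            · have hxx : |ΔS n x * (aCE x / dCE x)| ≤ (c:ℝ) := hx.2
              calc |χ c x * (ΔS n x * (aCE x / dCE x))|
                  = |χ c x| * |ΔS n x * (aCE x / dCE x)| := abs_mul _ _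
                _ ≤ 1 * (c:ℝ) := mul_le_mul (hχb c x) hxx (abs_nonneg _) zero_le_one
                _ = (c:ℝ) := one_mul _
            · simp only [hχdef, Set.indicator_of_notMem hx, zero_mul, abs_zero]
              positivity
          -- the per-truncation-level vanishing
          have hstep : ∀ c : ℕ, ∫ x in s, χ c x * (G x * (ΔS n x *
              ∑ j ∈ Finset.Icc (t+1) N, termF N w H β ρ ΔS j x)) ∂μ = 0 := by
            intro c
            have hg1sm : StronglyMeasurable[ℱ t]
                (fun x => χ c x * G x * (ΔS n x * (eCE x / dCE x))) :=
              ((hχsm c).mul hG).mul hρsm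
            have hg2sm : StronglyMeasurable[ℱ t]
                (fun x => χ c x * G x * (ΔS n x * (aCE x / dCE x))) :=
              ((hχsm c).mul hG).mul hβsm
            have hg1b : ∀ x, |χ c x * G x * (ΔS n x * (eCE x / dCE x))| ≤ (c:ℝ) := by
              intro x
              rw [show χ c x * G x * (ΔS n x * (eCE x / dCE x))
                  = G x * (χ c x * (ΔS n x * (eCE x / dCE x))) from by ring, abs_mul]
              calc |G x| * |χ c x * (ΔS n x * (eCE x / dCE x))|
                  ≤ 1 * (c:ℝ) :=
                    mul_le_mul (hGb x) (hχbnd1 c x) (abs_nonneg _) zero_le_one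
                _ = (c:ℝ) := one_mul _
            have hg2b : ∀ x, |χ c x * G x * (ΔS n x * (aCE x / dCE x))| ≤ (c:ℝ) := by
              intro x
              rw [show χ c x * G x * (ΔS n x * (aCE x / dCE x))
                  = G x * (χ c x * (ΔS n x * (aCE x / dCE x))) from by ring, abs_mul]
              calc |G x| * |χ c x * (ΔS n x * (aCE x / dCE x))|
                  ≤ 1 * (c:ℝ) :=
                    mul_le_mul (hGb x) (hχbnd2 c x) (abs_nonneg _) zero_le_one
                _ = (c:ℝ) := one_mul _
            -- the pulled-out integral vanishes
            have hu0 : ∫ x in s,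
                (χ c x * G x * (ΔS n x * (eCE x / dCE x)) * (ΔS (t+1) x * Aproc N w β ΔS (t+1) x)
                 - χ c x * G x * (ΔS n x * (aCE x / dCE x)) * (ΔS (t+1) x * Bproc N w H β ΔS (t+1) x)) ∂μ
                = 0 := by
              refine pullout_zero (ℱ.le t) intA intB hg1sm hg2sm (c:ℝ) hg1b hg2b ?_ hst
              intro x
              simp only [haCEdef, heCEdef, hdCEdef]
              ring
            -- integrability of the head term (measurable version)
            have i1 : Integrable (fun x => χ c x * G x * (ΔS n x * (eCE x / dCE x))
                * (ΔS (t+1) x * Aproc N w β ΔS (t+1) x)) μ := by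
              refine Integrable.mono' (intA.norm.const_mul (c:ℝ))
                (((hg1sm.mono (ℱ.le t)).aestronglyMeasurable).mul intA.1)
                (ae_of_all _ fun x => ?_)
              rw [norm_mul]
              exact mul_le_mul_of_nonneg_right
                (by rw [Real.norm_eq_abs]; exact hg1b x) (norm_nonneg _)
            have i2 : Integrable (fun x => χ c x * G x * (ΔS n x * (aCE x / dCE x))
                * (ΔS (t+1) x * Bproc N w H β ΔS (t+1) x)) μ := by
              refine Integrable.mono' (intB.norm.const_mul (c:ℝ))
                (((hg2sm.mono (ℱ.le t)).aestronglyMeasurable).mul intB.1)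
                (ae_of_all _ fun x => ?_)
              rw [norm_mul]
              exact mul_le_mul_of_nonneg_right
                (by rw [Real.norm_eq_abs]; exact hg2b x) (norm_nonneg _)
            have hu_int : Integrable (fun x =>
                χ c x * G x * (ΔS n x * (eCE x / dCE x)) * (ΔS (t+1) x * Aproc N w β ΔS (t+1) x)
                - χ c x * G x * (ΔS n x * (aCE x / dCE x)) * (ΔS (t+1) x * Bproc N w H β ΔS (t+1) x)) μ :=
              i1.sub i2
            -- the head term with the true ρ/β coefficients
            have hw_eq : (fun x => χ c x * G x * (ΔS n x * termF N w H β ρ ΔS (t+1) x))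
                =ᵐ[μ] (fun x =>
                χ c x * G x * (ΔS n x * (eCE x / dCE x)) * (ΔS (t+1) x * Aproc N w β ΔS (t+1) x)
                - χ c x * G x * (ΔS n x * (aCE x / dCE x)) * (ΔS (t+1) x * Bproc N w H β ΔS (t+1) x)) := by
              filter_upwards [hρm, hβm] with x h1 h2
              simp only [termF]
              rw [h1, h2]; ring
            have hw_int : Integrable
                (fun x => χ c x * G x * (ΔS n x * termF N w H β ρ ΔS (t+1) x)) μ :=
              hu_int.congr hw_eq.symm
            have hfull_int : Integrable (fun x => χ c x * (G x * (ΔS n x *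
                ∑ j ∈ Finset.Icc (t+1) N, termF N w H β ρ ΔS j x))) μ := by
              refine Integrable.mono' hint.norm
                ((((hχsm c).mono (ℱ.le t)).aestronglyMeasurable).mul hint.1)
                (ae_of_all _ fun x => ?_)
              rw [norm_mul]
              calc ‖χ c x‖ * ‖G x * (ΔS n x * ∑ j ∈ Finset.Icc (t+1) N, termF N w H β ρ ΔS j x)‖
                  ≤ 1 * ‖G x * (ΔS n x * ∑ j ∈ Finset.Icc (t+1) N, termF N w H β ρ ΔS j x)‖ :=
                    mul_le_mul_of_nonneg_right
                      (by rw [Real.norm_eq_abs]; exact hχb c x) (norm_nonneg _)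
                _ = _ := one_mul _
            have hv_int : Integrable (fun x => (χ c x * G x) * (ΔS n x *
                ∑ j ∈ Finset.Icc (t+1+1) N, termF N w H β ρ ΔS j x)) μ := by
              refine (hfull_int.sub hw_int).congr (ae_of_all _ fun x => ?_)
              simp only [Pi.sub_apply]
              rw [hsumsplit x]; ring
            have hv0 : ∫ x in s, (χ c x * G x) * (ΔS n x *
                ∑ j ∈ Finset.Icc (t+1+1) N, termF N w H β ρ ΔS j x) ∂μ = 0 := by
              refine ih (t+1) (by omega) (by omega) (fun x => χ c x * G x)
                (((hχsm c).mono (ℱ.mono (Nat.le_succ t))).mul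
                  (hG.mono (ℱ.mono (Nat.le_succ t)))) ?_ hv_int s hs
              intro x
              calc |χ c x * G x| = |χ c x| * |G x| := abs_mul _ _
                _ ≤ 1 * 1 := mul_le_mul (hχb c x) (hGb x) (abs_nonneg _) zero_le_one
                _ = 1 := one_mul 1
            have hsumeq : ∀ x : Ω, χ c x * (G x * (ΔS n x *
                ∑ j ∈ Finset.Icc (t+1) N, termF N w H β ρ ΔS j x))
                = χ c x * G x * (ΔS n x * termF N w H β ρ ΔS (t+1) x)
                  + (χ c x * G x) * (ΔS n x *
                      ∑ j ∈ Finset.Icc (t+1+1) N, termF N w H β ρ ΔS j x) := by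
              intro x; rw [hsumsplit x]; ring
            have hw0 : ∫ x in s, χ c x * G x * (ΔS n x * termF N w H β ρ ΔS (t+1) x) ∂μ = 0 := by
              rw [setIntegral_congr_ae hs0 (hw_eq.mono fun x hx _ => hx)]
              exact hu0
            calc ∫ x in s, χ c x * (G x * (ΔS n x *
                  ∑ j ∈ Finset.Icc (t+1) N, termF N w H β ρ ΔS j x)) ∂μ
                = ∫ x in s, (χ c x * G x * (ΔS n x * termF N w H β ρ ΔS (t+1) x)
                    + (χ c x * G x) * (ΔS n x *
                        ∑ j ∈ Finset.Icc (t+1+1) N, termF N w H β ρ ΔS j x)) ∂μ :=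
                  setIntegral_congr_ae hs0 (ae_of_all _ fun x _ => hsumeq x)
              _ = (∫ x in s, χ c x * G x * (ΔS n x * termF N w H β ρ ΔS (t+1) x) ∂μ)
                  + ∫ x in s, (χ c x * G x) * (ΔS n x *
                      ∑ j ∈ Finset.Icc (t+1+1) N, termF N w H β ρ ΔS j x) ∂μ :=
                  integral_add hw_int.integrableOn hv_int.integrableOn
              _ = 0 := by rw [hw0, hv0]; norm_num
          -- dominated convergence in the truncation level
          have hlim : Filter.Tendsto (fun c : ℕ => ∫ x in s, χ c x * (G x * (ΔS n x *
              ∑ j ∈ Finset.Icc (t+1) N, termF N w H β ρ ΔS j x)) ∂μ) Filter.atTop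
              (nhds (∫ x in s, G x * (ΔS n x *
                ∑ j ∈ Finset.Icc (t+1) N, termF N w H β ρ ΔS j x) ∂μ)) := by
            refine tendsto_integral_of_dominated_convergence
              (fun x => ‖G x * (ΔS n x * ∑ j ∈ Finset.Icc (t+1) N, termF N w H β ρ ΔS j x)‖)
              (fun c => ((((hχsm c).mono (ℱ.le t)).aestronglyMeasurable).mul hint.1).restrict)
              hint.norm.integrableOn ?_ ?_
            · intro c
              refine ae_of_all _ fun x => ?_
              rw [norm_mul]
              calc ‖χ c x‖ * ‖G x * (ΔS n x * ∑ j ∈ Finset.Icc (t+1) N, termF N w H β ρ ΔS j x)‖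
                  ≤ 1 * ‖G x * (ΔS n x * ∑ j ∈ Finset.Icc (t+1) N, termF N w H β ρ ΔS j x)‖ :=
                    mul_le_mul_of_nonneg_right
                      (by rw [Real.norm_eq_abs]; exact hχb c x) (norm_nonneg _)
                _ = _ := one_mul _
            · refine ae_of_all _ fun x => ?_
              have hev : ∀ᶠ c : ℕ in Filter.atTop, χ c x = 1 := by
                refine Filter.eventually_atTop.mpr
                  ⟨max ⌈|ΔS n x * (eCE x / dCE x)|⌉₊ ⌈|ΔS n x * (aCE x / dCE x)|⌉₊,
                    fun c hc => ?_⟩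
                have hx : x ∈ Fs c := by
                  refine ⟨?_, ?_⟩
                  · refine le_trans (Nat.le_ceil _) ?_
                    exact_mod_cast Nat.cast_le.mpr (le_trans (le_max_left _ _) hc)
                  · refine le_trans (Nat.le_ceil _) ?_
                    exact_mod_cast Nat.cast_le.mpr (le_trans (le_max_right _ _) hc)
                simp [hχdef, Set.indicator_of_mem hx]
              refine Filter.Tendsto.congr' ?_ tendsto_const_nhds
              filter_upwards [hev] with c hc
              rw [hc, one_mul]
          simp only [hstep] at hlim
          exact tendsto_nhds_unique hlim tendsto_const_nhds
        · -- bad case : the conditional expectation defining δ is 0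
          have hδ0 : δp (t+1) =ᵐ[μ] fun _ => (0:ℝ) := by
            have h0 : μ[fun x => ΔS (t+1) x ^ 2 * Dproc N w β ΔS (t+1) x|ℱ t] = 0 :=
              condExp_of_not_integrable hd
            rw [h0] at hδt
            exact hδt
          have heq : (fun x => G x * (ΔS n x * ∑ j ∈ Finset.Icc (t+1) N, termF N w H β ρ ΔS j x))
              =ᵐ[μ] fun x => G x * (ΔS n x * ∑ j ∈ Finset.Icc (t+1+1) N, termF N w H β ρ ΔS j x) := by
            filter_upwards [hδ0] with x hx
            have hb0 : β (t+1) x = 0 := by rw [hβ, hx]; simp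
            have hr0 : ρ (t+1) x = 0 := by rw [hρ, hx]; simp
            rw [hsumsplit x]
            simp [termF, hb0, hr0]
          rw [setIntegral_congr_ae hs0 (heq.mono fun x hx _ => hx)]
          exact ih (t+1) (by omega) (by omega) G (hG.mono (ℱ.mono (Nat.le_succ t))) hGb
            (hint.congr heq) s hs
    -- swap-of-summation identities
  have hID1 : ∀ x : Ω, (∑ i ∈ Finset.Icc n N, w i x *
      ∑ j ∈ Finset.Icc (n+1) i, ρ j x * ΔS j x *
        ∏ k ∈ Finset.Icc (j+1) i, (1 - β k x * ΔS k x))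
      = ∑ j ∈ Finset.Icc (n+1) N, ρ j x * ΔS j x * Aproc N w β ΔS j x := fun x =>
    sum_swap_aux n N (fun i => w i x) (fun j => ρ j x * ΔS j x)
      (fun j i => ∏ k ∈ Finset.Icc (j+1) i, (1 - β k x * ΔS k x))
  have hID2 : ∀ x : Ω, (∑ i ∈ Finset.Icc n N, w i x * H i x *
      ∑ j ∈ Finset.Icc (n+1) i, β j x * ΔS j x *
        ∏ k ∈ Finset.Icc (j+1) i, (1 - β k x * ΔS k x))
      = ∑ j ∈ Finset.Icc (n+1) N, β j x * ΔS j x * Bproc N w H β ΔS j x := by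
    intro x
    have h0 := sum_swap_aux n N (fun i => w i x * H i x) (fun j => β j x * ΔS j x)
      (fun j i => ∏ k ∈ Finset.Icc (j+1) i, (1 - β k x * ΔS k x))
    refine h0.trans (Finset.sum_congr rfl fun j _ => ?_)
    unfold Bproc
    refine congrArg (fun z => β j x * ΔS j x * z) ?_
    exact Finset.sum_congr rfl fun i _ => by ring
  have hsub : ∀ x : Ω, (ΔS n x * ∑ i ∈ Finset.Icc n N, w i x *
      ∑ j ∈ Finset.Icc (n+1) i, ρ j x * ΔS j x *
        ∏ k ∈ Finset.Icc (j+1) i, (1 - β k x * ΔS k x))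
      = (ΔS n x * ∑ i ∈ Finset.Icc n N, w i x * H i x *
          ∑ j ∈ Finset.Icc (n+1) i, β j x * ΔS j x *
            ∏ k ∈ Finset.Icc (j+1) i, (1 - β k x * ΔS k x))
        + ΔS n x * ∑ j ∈ Finset.Icc (n+1) N, termF N w H β ρ ΔS j x := by
    intro x
    rw [hID1 x, hID2 x]
    have hts : (∑ j ∈ Finset.Icc (n+1) N, termF N w H β ρ ΔS j x)
        = (∑ j ∈ Finset.Icc (n+1) N, ρ j x * ΔS j x * Aproc N w β ΔS j x)
          - ∑ j ∈ Finset.Icc (n+1) N, β j x * ΔS j x * Bproc N w H β ΔS j x := by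
      rw [← Finset.sum_sub_distrib]
      exact Finset.sum_congr rfl fun j _ => rfl
    rw [hts]; ring
  have hint_h : Integrable
      (fun x => ΔS n x * ∑ j ∈ Finset.Icc (n+1) N, termF N w H β ρ ΔS j x) μ := by
    refine ((hint1 n).sub (hint2 n)).congr (ae_of_all _ fun x => ?_)
    simp only [Pi.sub_apply]
    have := hsub x
    linarith
  have hzero0 : (fun _ : Ω => (0:ℝ)) =ᵐ[μ]
      μ[fun x => ΔS n x * ∑ j ∈ Finset.Icc (n+1) N, termF N w H β ρ ΔS j x|ℱ (n-1)] := by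
    refine ae_eq_condExp_of_forall_setIntegral_eq (ℱ.le (n-1)) hint_h
      (fun s _ _ => integrableOn_zero) (fun s hs _ => ?_)
      stronglyMeasurable_const.aestronglyMeasurable
    have h0 := key N n le_rfl (by omega) (fun _ => (1:ℝ)) stronglyMeasurable_const
      (fun x => by norm_num)
      ((hint_h.congr (ae_of_all _ fun x => (one_mul _).symm))) s hs
    simp only [one_mul] at h0
    simp only [integral_zero]
    exact h0.symm
  have hfe : (fun x => ΔS n x * ∑ i ∈ Finset.Icc n N, w i x *
      ∑ j ∈ Finset.Icc (n+1) i, ρ j x * ΔS j x *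
        ∏ k ∈ Finset.Icc (j+1) i, (1 - β k x * ΔS k x))
      = fun x => (ΔS n x * ∑ i ∈ Finset.Icc n N, w i x * H i x *
          ∑ j ∈ Finset.Icc (n+1) i, β j x * ΔS j x *
            ∏ k ∈ Finset.Icc (j+1) i, (1 - β k x * ΔS k x))
        + ΔS n x * ∑ j ∈ Finset.Icc (n+1) N, termF N w H β ρ ΔS j x := funext hsub
  rw [hfe]
  calc μ[fun x => (ΔS n x * ∑ i ∈ Finset.Icc n N, w i x * H i x *
          ∑ j ∈ Finset.Icc (n+1) i, β j x * ΔS j x *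
            ∏ k ∈ Finset.Icc (j+1) i, (1 - β k x * ΔS k x))
        + ΔS n x * ∑ j ∈ Finset.Icc (n+1) N, termF N w H β ρ ΔS j x|ℱ (n-1)]
      =ᵐ[μ] μ[fun x => ΔS n x * ∑ i ∈ Finset.Icc n N, w i x * H i x *
          ∑ j ∈ Finset.Icc (n+1) i, β j x * ΔS j x *
            ∏ k ∈ Finset.Icc (j+1) i, (1 - β k x * ΔS k x)|ℱ (n-1)]
        + μ[fun x => ΔS n x * ∑ j ∈ Finset.Icc (n+1) N, termF N w H β ρ ΔS j x|ℱ (n-1)] :=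
      condExp_add (hint2 n) hint_h _
    _ =ᵐ[μ] μ[fun x => ΔS n x * ∑ i ∈ Finset.Icc n N, w i x * H i x *
          ∑ j ∈ Finset.Icc (n+1) i, β j x * ΔS j x *
            ∏ k ∈ Finset.Icc (j+1) i, (1 - β k x * ΔS k x)|ℱ (n-1)] := by
      filter_upwards [hzero0] with x hx
      simp only [Pi.add_apply, ← hx]
      simp
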